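/- Fix δ ≥ −1 and for a > 1 set σ(a) := (8(a+δ))^{−1/2} and R(a) := sup_{x ∈ (0,1)} β_{a,a}(x)/φ_{1/2,σ(a)}(x). Then the function a ↦ log R(a) is strictly decreasing on (1,∞). -/

import Mathlib

open MeasureTheory

/-- The Beta function `B(a,b) = ∫₀¹ t^{a-1} (1-t)^{b-1} dt`. -/
noncomputable def betaFn (a b : ℝ) : ℝ :=
  ∫ t in (0:ℝ)..1, t ^ (a - 1) * (1 - t) ^ (b - 1)

/-- Density of the symmetric Beta(a,a) distribution on (0,1). -/
noncomputable def betaSymPDF (a t : ℝ) : ℝ :=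
  (betaFn a a)⁻¹ * t ^ (a - 1) * (1 - t) ^ (a - 1)

/-- Density of the normal distribution N(1/2, σ²). -/
noncomputable def gaussPDF (σ x : ℝ) : ℝ :=
  (Real.sqrt (2 * Real.pi * σ ^ 2))⁻¹ * Real.exp (-(x - 1 / 2) ^ 2 / (2 * σ ^ 2))

/-- `R(a) = sup_{x ∈ (0,1)} β_{a,a}(x) / φ_{1/2, σ(a)}(x)` with
`σ(a) = (8(a+δ))^{-1/2}`. -/
noncomputable def Rratio (δ a : ℝ) : ℝ :=
  ⨆ x : Set.Ioo (0:ℝ) 1, betaSymPDF a x / gaussPDF ((8 * (a + δ)) ^ (-(1:ℝ) / 2)) x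

open Filter Real

noncomputable def rhoAux (t : ℝ) : ℝ :=
  (t-1) * (Real.log (t-1) - Real.log t) + (t-1/2) * (Real.log (t+1/2) - Real.log (t-1/2))

lemma rhoAux_hasDeriv {t : ℝ} (ht : 1 < t) :
    HasDerivAt rhoAux
      ((Real.log (t-1) - Real.log t) + (Real.log (t+1/2) - Real.log (t-1/2))
        + (1/t - 1/(t+1/2))) t := by
  have h1 : t - 1 ≠ 0 := by linarith
  have h2 : t ≠ 0 := by linarith
  have h3 : t + 1/2 ≠ 0 := by linarith
  have h4 : t - 1/2 ≠ 0 := by linarith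
  have d1 : HasDerivAt (fun t : ℝ => (t-1) * (Real.log (t-1) - Real.log t))
      (1 * (Real.log (t-1) - Real.log t) + (t-1) * (1/(t-1) - 1/t)) t := by
    exact (((hasDerivAt_id t).sub_const 1).mul
      ((((hasDerivAt_id t).sub_const 1).log h1).sub ((hasDerivAt_id t).log h2)))
  have d2 : HasDerivAt (fun t : ℝ => (t-1/2) * (Real.log (t+1/2) - Real.log (t-1/2)))
      (1 * (Real.log (t+1/2) - Real.log (t-1/2)) + (t-1/2) * (1/(t+1/2) - 1/(t-1/2))) t := by
    exact (((hasDerivAt_id t).sub_const (1/2)).mul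
      ((((hasDerivAt_id t).add_const (1/2)).log h3).sub
        (((hasDerivAt_id t).sub_const (1/2)).log h4)))
  have := d1.add d2
  have e1 : (t-1) * (1/(t-1) - 1/t) = 1/t := by field_simp; ring
  have h3' : 2*t + 1 ≠ 0 := by linarith
  have h4' : 2*t - 1 ≠ 0 := by linarith
  have e2 : (t-1/2) * (1/(t+1/2) - 1/(t-1/2)) = -(1/(t+1/2)) := by
    rw [mul_sub, mul_one_div, mul_one_div, div_self h4, div_sub_one h3,
      show t - 1/2 - (t+1/2) = -1 by ring, neg_div, one_div]
  refine this.congr_deriv ?_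
  rw [e1, e2]
  ring

lemma rhoAux_deriv_neg {t : ℝ} (ht : 1 < t) :
    (Real.log (t-1) - Real.log t) + (Real.log (t+1/2) - Real.log (t-1/2))
        + (1/t - 1/(t+1/2)) < 0 := by
  have h1 : (0:ℝ) < t - 1 := by linarith
  have h2 : (0:ℝ) < t := by linarith
  have h3 : (0:ℝ) < t + 1/2 := by linarith
  have h4 : (0:ℝ) < t - 1/2 := by linarith
  have key : Real.log ((t-1)*(t+1/2)) - Real.log (t*(t-1/2))
      ≤ ((t-1)*(t+1/2)) / (t*(t-1/2)) - 1 := by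
    rw [← Real.log_div (by positivity) (by positivity)]
    exact Real.log_le_sub_one_of_pos (by positivity)
  rw [Real.log_mul h1.ne' h3.ne', Real.log_mul h2.ne' h4.ne'] at key
  have e1 : ((t-1)*(t+1/2)) / (t*(t-1/2)) - 1 = -(1/2) / (t*(t-1/2)) := by
    have h5 : (t-1)*(t+1/2) = t*(t-1/2) - 1/2 := by ring
    rw [h5, sub_div, div_self (by positivity), neg_div]
    ring
  have e2 : -(1/2) / (t*(t-1/2)) < -(1/t - 1/(t+1/2)) := by
    have : 1/t - 1/(t+1/2) = (1/2) / (t*(t+1/2)) := by field_simp; ring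
    rw [this, neg_div, neg_lt_neg_iff]
    apply div_lt_div_of_pos_left (by norm_num) (by positivity)
    nlinarith
  linarith
  
lemma rhoAux_strictAntiOn : StrictAntiOn rhoAux (Set.Ioi 1) := by
  apply strictAntiOn_of_deriv_neg (convex_Ioi 1)
  · intro x hx
    exact (rhoAux_hasDeriv hx).continuousAt.continuousWithinAt
  · intro x hx
    rw [interior_Ioi] at hx
    rw [(rhoAux_hasDeriv hx).deriv]
    exact rhoAux_deriv_neg hx

noncomputable def PhiAux (t : ℝ) : ℝ :=
  Real.log (Real.Gamma (t+1/2)) - Real.log (Real.Gamma t)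
    + (t-1)*Real.log (t-1) - (t-1/2)*Real.log (t-1/2)

lemma Phi_succ {t : ℝ} (ht : 1 < t) : PhiAux (t+1) = PhiAux t - rhoAux t := by
  have h2 : t ≠ 0 := by linarith
  have h3 : (0:ℝ) < t + 1/2 := by linarith
  have hG : (0:ℝ) < Real.Gamma t := Real.Gamma_pos_of_pos (by linarith)
  have hG2 : (0:ℝ) < Real.Gamma (t+1/2) := Real.Gamma_pos_of_pos (by linarith)
  have e1 : Real.Gamma (t+1) = t * Real.Gamma t := Real.Gamma_add_one h2
  have e2 : Real.Gamma (t+1+1/2) = (t+1/2) * Real.Gamma (t+1/2) := by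
    rw [show t+1+1/2 = (t+1/2)+1 by ring, Real.Gamma_add_one h3.ne']
  rw [PhiAux, PhiAux, rhoAux, e1, e2, Real.log_mul h2 hG.ne', Real.log_mul h3.ne' hG2.ne',
    show t+1-1 = t by ring, show t+1-1/2 = t+1/2 by ring]
  ring

lemma Phi_add_nat {t : ℝ} (ht : 1 < t) (n : ℕ) :
    PhiAux (t + n) = PhiAux t - ∑ k ∈ Finset.range n, rhoAux (t + k) := by
  induction n with
  | zero => simp
  | succ m ih =>
    have : t + (m+1 : ℕ) = (t + m) + 1 := by push_cast; ring
    rw [this, Phi_succ (by push_cast; linarith : 1 < t + (m:ℝ)), ih, Finset.sum_range_succ]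
    ring

-- convexity bounds on the Gamma part
lemma gamma_ratio_upper {x : ℝ} (hx : 0 < x) :
    Real.log (Real.Gamma (x+1/2)) - Real.log (Real.Gamma x) - (1/2)*Real.log x ≤ 0 := by
  have hc := Real.convexOn_log_Gamma
  have h := hc.2 (Set.mem_Ioi.mpr hx) (Set.mem_Ioi.mpr (by linarith : (0:ℝ) < x + 1))
    (by norm_num : (0:ℝ) ≤ 1/2) (by norm_num : (0:ℝ) ≤ 1/2) (by norm_num)
  simp only [smul_eq_mul, Function.comp_apply] at h
  rw [show (1/2)*x + (1/2)*(x+1) = x + 1/2 by ring] at h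
  rw [Real.Gamma_add_one hx.ne', Real.log_mul hx.ne' (Real.Gamma_pos_of_pos hx).ne'] at h
  linarith

lemma gamma_ratio_lower {x : ℝ} (hx : 0 < x) :
    (1/2)*(Real.log x - Real.log (x+1/2)) ≤
      Real.log (Real.Gamma (x+1/2)) - Real.log (Real.Gamma x) - (1/2)*Real.log x := by
  have hx2 : (0:ℝ) < x + 1/2 := by linarith
  have hc := Real.convexOn_log_Gamma
  have h := hc.2 (Set.mem_Ioi.mpr hx2) (Set.mem_Ioi.mpr (by linarith : (0:ℝ) < x + 3/2))
    (by norm_num : (0:ℝ) ≤ 1/2) (by norm_num : (0:ℝ) ≤ 1/2) (by norm_num)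
  simp only [smul_eq_mul, Function.comp_apply] at h
  rw [show (1/2)*(x+1/2) + (1/2)*(x+3/2) = x + 1 by ring] at h
  rw [Real.Gamma_add_one hx.ne', Real.log_mul hx.ne' (Real.Gamma_pos_of_pos hx).ne'] at h
  rw [show x + 3/2 = (x+1/2)+1 by ring, Real.Gamma_add_one hx2.ne',
    Real.log_mul hx2.ne' (Real.Gamma_pos_of_pos hx2).ne'] at h
  linarith

lemma tendsto_log_ratio : Tendsto (fun x : ℝ => Real.log (x+1/2) - Real.log x) atTop (nhds 0) := by
  have h1 : Tendsto (fun x : ℝ => 1 + 1/(2*x)) atTop (nhds 1) := by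
    have h2 : Tendsto (fun x : ℝ => 1/(2*x)) atTop (nhds 0) := by
      have h3 : Tendsto (fun x : ℝ => (1/2) * x⁻¹) atTop (nhds ((1/2) * 0)) :=
        tendsto_inv_atTop_zero.const_mul _
      rw [mul_zero] at h3
      exact h3.congr (fun x => by field_simp)
    simpa using tendsto_const_nhds.add h2
  have h2 : Tendsto (fun x : ℝ => Real.log (1 + 1/(2*x))) atTop (nhds 0) := by
    have := (Real.continuousAt_log (by norm_num : (1:ℝ) ≠ 0)).tendsto.comp h1
    simpa [Function.comp_def] using this
  apply h2.congr'
  filter_upwards [eventually_gt_atTop (0:ℝ)] with x hx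
  rw [← Real.log_div (by positivity) hx.ne']
  congr 1
  field_simp

lemma tendsto_log_ratio' :
    Tendsto (fun x : ℝ => Real.log x - Real.log (x-1/2)) atTop (nhds 0) := by
  have := tendsto_log_ratio.comp (tendsto_atTop_add_const_right atTop (-(1/2):ℝ) tendsto_id)
  refine this.congr (fun x => ?_)
  simp only [Function.comp_apply, id_eq]
  ring_nf

lemma tendsto_ratio_one :
    Tendsto (fun x : ℝ => (x-1)/(x-1/2)) atTop (nhds 1) := by
  have hinv : Tendsto (fun x : ℝ => (x - 1/2)⁻¹) atTop (nhds 0) :=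
    tendsto_inv_atTop_zero.comp (tendsto_atTop_add_const_right atTop (-(1/2):ℝ) tendsto_id)
  have h : Tendsto (fun x : ℝ => 1 - (1/2) * (x-1/2)⁻¹) atTop (nhds (1 - (1/2)*0)) :=
    tendsto_const_nhds.sub (hinv.const_mul _)
  rw [mul_zero, sub_zero] at h
  apply h.congr'
  filter_upwards [eventually_gt_atTop (1:ℝ)] with x hx
  have hx2 : x - 1/2 ≠ 0 := by linarith
  rw [eq_comm, show x - 1 = (x-1/2) - 1/2 by ring, sub_div, div_self hx2, div_eq_mul_inv]

lemma Phi_tendsto : Tendsto PhiAux atTop (nhds (-(1/2))) := by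
  have hA : Tendsto (fun x : ℝ =>
      Real.log (Real.Gamma (x+1/2)) - Real.log (Real.Gamma x) - (1/2)*Real.log x)
      atTop (nhds 0) := by
    have hlow : Tendsto (fun x : ℝ => -((1/2) * (Real.log (x+1/2) - Real.log x)))
        atTop (nhds (-((1/2) * 0))) := (tendsto_log_ratio.const_mul _).neg
    rw [mul_zero, neg_zero] at hlow
    refine tendsto_of_tendsto_of_tendsto_of_le_of_le' hlow tendsto_const_nhds ?_ ?_
    · filter_upwards [eventually_gt_atTop (0:ℝ)] with x hx
      have := gamma_ratio_lower hx
      linarith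
    · filter_upwards [eventually_gt_atTop (0:ℝ)] with x hx
      exact gamma_ratio_upper hx
  have hC : Tendsto (fun x : ℝ => (1/2)*(Real.log x - Real.log (x-1/2)))
      atTop (nhds ((1/2) * 0)) := tendsto_log_ratio'.const_mul _
  rw [mul_zero] at hC
  have hB : Tendsto (fun x : ℝ => (x-1)*(Real.log (x-1) - Real.log (x-1/2)))
      atTop (nhds (-(1/2))) := by
    have hup : Tendsto (fun x : ℝ => -((1/2) * ((x-1)/(x-1/2)))) atTop
        (nhds (-((1/2) * 1))) := (tendsto_ratio_one.const_mul _).neg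
    rw [mul_one] at hup
    refine tendsto_of_tendsto_of_tendsto_of_le_of_le' tendsto_const_nhds hup ?_ ?_
    · filter_upwards [eventually_gt_atTop (1:ℝ)] with x hx
      have h1 : (0:ℝ) < x - 1 := by linarith
      have h2 : (0:ℝ) < x - 1/2 := by linarith
      have key : Real.log (x-1/2) - Real.log (x-1) ≤ (1/2)/(x-1) := by
        have := Real.log_le_sub_one_of_pos (show (0:ℝ) < (x-1/2)/(x-1) by positivity)
        rw [Real.log_div h2.ne' h1.ne'] at this
        have e : (x-1/2)/(x-1) - 1 = (1/2)/(x-1) := by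
          rw [div_sub_one h1.ne']; norm_num
        linarith
      have h3 : (x-1) * (Real.log (x-1/2) - Real.log (x-1)) ≤ 1/2 := by
        have := mul_le_mul_of_nonneg_left key h1.le
        have e3 : (x-1) * ((1/2)/(x-1)) = 1/2 := by field_simp
        linarith
      nlinarith
    · filter_upwards [eventually_gt_atTop (1:ℝ)] with x hx
      have h1 : (0:ℝ) < x - 1 := by linarith
      have h2 : (0:ℝ) < x - 1/2 := by linarith
      have key : Real.log (x-1) - Real.log (x-1/2) ≤ -((1/2)/(x-1/2)) := by
        have := Real.log_le_sub_one_of_pos (show (0:ℝ) < (x-1)/(x-1/2) by positivity)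
        rw [Real.log_div h1.ne' h2.ne'] at this
        have e : (x-1)/(x-1/2) - 1 = -((1/2)/(x-1/2)) := by
          rw [div_sub_one h2.ne', show x - 1 - (x-1/2) = -(1/2) by ring, neg_div]
        linarith
      have h3 := mul_le_mul_of_nonneg_left key h1.le
      have e2 : (x-1) * -((1/2)/(x-1/2)) = -((1/2) * ((x-1)/(x-1/2))) := by
        field_simp
      rw [e2] at h3
      exact h3
  have := (hA.add hB).add hC
  rw [show (0:ℝ) + -(1/2) + 0 = -(1/2) by norm_num] at this
  refine this.congr (fun x => ?_)
  rw [PhiAux]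
  ring

lemma Phi_diff_le {a b : ℝ} (ha : 1 < a) (hab : a < b) :
    PhiAux b - PhiAux a ≤ rhoAux b - rhoAux a := by
  have hb : 1 < b := lt_trans ha hab
  have hstep : ∀ n : ℕ, 1 ≤ n →
      PhiAux b - PhiAux a - (rhoAux b - rhoAux a)
        ≤ PhiAux (b + n) - PhiAux (a + n) := by
    intro n hn
    obtain ⟨m, rfl⟩ : ∃ m, n = m + 1 := ⟨n - 1, (Nat.succ_pred_eq_of_pos hn).symm⟩
    have hA := Phi_add_nat ha (m+1)
    have hB := Phi_add_nat hb (m+1)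
    have hsum : ∑ k ∈ Finset.range (m+1), (rhoAux (b + k) - rhoAux (a + k))
        ≤ rhoAux b - rhoAux a := by
      rw [Finset.sum_range_succ']
      have h0 : rhoAux (b + (0:ℕ)) - rhoAux (a + (0:ℕ)) = rhoAux b - rhoAux a := by
        norm_num
      rw [h0]
      have hneg : ∑ k ∈ Finset.range m, (rhoAux (b + (k+1:ℕ)) - rhoAux (a + (k+1:ℕ))) ≤ 0 := by
        apply Finset.sum_nonpos
        intro k _
        have hka : (1:ℝ) < a + (k+1:ℕ) := by
          have : (0:ℝ) ≤ (k+1:ℕ) := Nat.cast_nonneg _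
          linarith
        have hkb : (1:ℝ) < b + (k+1:ℕ) := by linarith
        have := rhoAux_strictAntiOn (Set.mem_Ioi.mpr hka) (Set.mem_Ioi.mpr hkb)
          (by linarith : a + ((k+1:ℕ):ℝ) < b + ((k+1:ℕ):ℝ))
        linarith
      linarith
    have hsum' : ∑ k ∈ Finset.range (m+1), (rhoAux (b + k) - rhoAux (a + k))
        = (∑ k ∈ Finset.range (m+1), rhoAux (b + k))
          - ∑ k ∈ Finset.range (m+1), rhoAux (a + k) := by
      rw [Finset.sum_sub_distrib]
    linarith [hsum, hsum'.symm.trans_le hsum]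
  -- limit
  have hseq : Tendsto (fun n : ℕ => PhiAux (b + n) - PhiAux (a + n)) atTop (nhds 0) := by
    have h1 : Tendsto (fun n : ℕ => PhiAux (b + n)) atTop (nhds (-(1/2))) := by
      apply Phi_tendsto.comp
      apply tendsto_atTop_add_const_left
      exact tendsto_natCast_atTop_atTop
    have h2 : Tendsto (fun n : ℕ => PhiAux (a + n)) atTop (nhds (-(1/2))) := by
      apply Phi_tendsto.comp
      apply tendsto_atTop_add_const_left
      exact tendsto_natCast_atTop_atTop
    simpa using h1.sub h2
  have := ge_of_tendsto hseq (eventually_atTop.mpr ⟨1, fun n hn => hstep n hn⟩)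
  linarith

lemma betaFn_eq {a : ℝ} (ha : 0 < a) :
    betaFn a a = Real.Gamma a * Real.Gamma a / Real.Gamma (2 * a) := by
  have h2a : (0:ℝ) < Real.Gamma (2 * a) := Real.Gamma_pos_of_pos (by linarith)
  have key : Complex.Gamma a * Complex.Gamma a
      = Complex.Gamma (a + a) * Complex.betaIntegral a a :=
    Complex.Gamma_mul_Gamma_eq_betaIntegral (by simpa using ha) (by simpa using ha)
  have hbeta : Complex.betaIntegral a a = (betaFn a a : ℂ) := by
    rw [Complex.betaIntegral, betaFn]
    rw [← intervalIntegral.integral_ofReal]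
    apply intervalIntegral.integral_congr
    intro x hx
    rw [Set.uIcc_of_le (by norm_num : (0:ℝ) ≤ 1)] at hx
    show (x:ℂ) ^ ((a:ℂ) - 1) * (1 - (x:ℂ)) ^ ((a:ℂ) - 1)
        = ((x ^ (a - 1) * (1 - x) ^ (a - 1) : ℝ) : ℂ)
    rw [Complex.ofReal_mul, Complex.ofReal_cpow hx.1,
      Complex.ofReal_cpow (by linarith [hx.2] : (0:ℝ) ≤ 1 - x)]
    push_cast
    ring
  rw [hbeta, show ((a:ℂ) + a) = ((2*a : ℝ) : ℂ) by push_cast; ring] at key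
  rw [Complex.Gamma_ofReal, Complex.Gamma_ofReal] at key
  rw [← Complex.ofReal_mul, ← Complex.ofReal_mul, Complex.ofReal_inj] at key
  field_simp [key.symm]
  linarith [key]

section SupComp
variable {a δ : ℝ} (ha : 1 < a) (hδ : -1 ≤ δ)

lemma sigma_sq (had : 0 < a + δ) :
    ((8 * (a + δ)) ^ (-(1:ℝ) / 2)) ^ 2 = (8 * (a + δ))⁻¹ := by
  rw [← Real.rpow_natCast ((8 * (a + δ)) ^ (-(1:ℝ) / 2)) 2, ← Real.rpow_mul (by linarith)]
  norm_num [Real.rpow_neg_one]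

lemma F_formula (had : 0 < a + δ) {x : ℝ} (hx : x ∈ Set.Ioo (0:ℝ) 1) :
    betaSymPDF a x / gaussPDF ((8 * (a + δ)) ^ (-(1:ℝ) / 2)) x
      = (betaFn a a)⁻¹ * Real.sqrt (2 * Real.pi * ((8 * (a + δ)) ^ (-(1:ℝ) / 2)) ^ 2)
        * Real.exp ((a-1) * Real.log (x*(1-x)) + 4*(a+δ)*(1/4 - x*(1-x))) := by
  obtain ⟨hx0, hx1⟩ := hx
  have h1x : (0:ℝ) < 1 - x := by linarith
  have hS : (0:ℝ) < 2 * Real.pi * ((8 * (a + δ)) ^ (-(1:ℝ) / 2)) ^ 2 := by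
    have : (0:ℝ) < (8 * (a + δ)) ^ (-(1:ℝ) / 2) := Real.rpow_pos_of_pos (by linarith) _
    positivity
  rw [betaSymPDF, gaussPDF]
  rw [Real.rpow_def_of_pos hx0, Real.rpow_def_of_pos h1x]
  rw [div_eq_mul_inv, mul_inv, inv_inv, ← Real.exp_neg]
  rw [sigma_sq had]
  have e1 : -(-(x - 1 / 2) ^ 2 / (2 * (8 * (a + δ))⁻¹)) = 4*(a+δ)*(1/4 - x*(1-x)) := by
    rw [show (2:ℝ) * (8*(a+δ))⁻¹ = (4*(a+δ))⁻¹ by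
      rw [eq_comm, inv_eq_iff_eq_inv, mul_inv, inv_inv]; ring, div_inv_eq_mul]
    ring
  rw [e1]
  rw [Real.log_mul hx0.ne' h1x.ne']
  rw [show (a-1) * (Real.log x + Real.log (1-x)) + 4*(a+δ)*(1/4 - x*(1-x))
      = (Real.log x * (a-1)) + ((Real.log (1-x) * (a-1)) + 4*(a+δ)*(1/4 - x*(1-x))) by ring,
    Real.exp_add, Real.exp_add]
  ring

lemma g_le (ha : 1 < a) (hδ : -1 ≤ δ) {u : ℝ} (hu : 0 < u) (hu4 : u ≤ 1/4) :
    (a-1) * Real.log u + 4*(a+δ)*(1/4 - u)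
      ≤ (a-1) * Real.log ((a-1)/(4*(a+δ))) + 4*(a+δ)*(1/4 - (a-1)/(4*(a+δ))) := by
  have ha1 : (0:ℝ) < a - 1 := by linarith
  have had : (0:ℝ) < a + δ := by linarith
  have hus : (0:ℝ) < (a-1)/(4*(a+δ)) := by positivity
  have hlog : Real.log u - Real.log ((a-1)/(4*(a+δ))) ≤ u/((a-1)/(4*(a+δ))) - 1 := by
    have := Real.log_le_sub_one_of_pos (show (0:ℝ) < u/((a-1)/(4*(a+δ))) by positivity)
    rwa [Real.log_div hu.ne' hus.ne'] at this
  have e : u/((a-1)/(4*(a+δ))) = 4*(a+δ)*u/(a-1) := by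
    rw [div_div_eq_mul_div]
    ring
  rw [e] at hlog
  have h2 : (a-1) * (Real.log u - Real.log ((a-1)/(4*(a+δ))))
      ≤ (a-1) * (4*(a+δ)*u/(a-1) - 1) := mul_le_mul_of_nonneg_left hlog ha1.le
  have e2 : (a-1) * (4*(a+δ)*u/(a-1) - 1) = 4*(a+δ)*u - (a-1) := by
    field_simp
  have e3 : 4*(a+δ)*((a-1)/(4*(a+δ))) = a - 1 := by
    field_simp
  nlinarith [h2, e2, e3]

lemma xstar_mem (ha : 1 < a) (hδ : -1 ≤ δ) :
    (1/2 - Real.sqrt (1/4 - (a-1)/(4*(a+δ)))) ∈ Set.Ioo (0:ℝ) 1 ∧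
    (1/2 - Real.sqrt (1/4 - (a-1)/(4*(a+δ)))) * (1 - (1/2 - Real.sqrt (1/4 - (a-1)/(4*(a+δ)))))
      = (a-1)/(4*(a+δ)) := by
  have ha1 : (0:ℝ) < a - 1 := by linarith
  have had : (0:ℝ) < a + δ := by linarith
  have hus : (0:ℝ) < (a-1)/(4*(a+δ)) := by positivity
  have hle : (a-1)/(4*(a+δ)) ≤ 1/4 := by
    rw [div_le_iff₀ (by positivity)]
    nlinarith
  have h0 : (0:ℝ) ≤ 1/4 - (a-1)/(4*(a+δ)) := by linarith
  have hsq : Real.sqrt (1/4 - (a-1)/(4*(a+δ))) ^ 2 = 1/4 - (a-1)/(4*(a+δ)) :=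
    Real.sq_sqrt h0
  have hslt : Real.sqrt (1/4 - (a-1)/(4*(a+δ))) < 1/2 := by
    have h14 : (1/4 - (a-1)/(4*(a+δ))) < (1/2)^2 := by norm_num; linarith
    calc Real.sqrt (1/4 - (a-1)/(4*(a+δ))) < Real.sqrt ((1/2)^2) :=
          Real.sqrt_lt_sqrt h0 h14
      _ = 1/2 := Real.sqrt_sq (by norm_num)
  have hsnn : (0:ℝ) ≤ Real.sqrt (1/4 - (a-1)/(4*(a+δ))) := Real.sqrt_nonneg _
  refine ⟨⟨by linarith, by linarith⟩, ?_⟩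
  nlinarith [hsq]

lemma Rratio_eq (ha : 1 < a) (hδ : -1 ≤ δ) :
    Rratio δ a = (betaFn a a)⁻¹ * Real.sqrt (2 * Real.pi * ((8 * (a + δ)) ^ (-(1:ℝ) / 2)) ^ 2)
        * Real.exp ((a-1) * Real.log ((a-1)/(4*(a+δ)))
            + 4*(a+δ)*(1/4 - (a-1)/(4*(a+δ)))) := by
  have had : (0:ℝ) < a + δ := by linarith
  obtain ⟨hmem, hval⟩ := xstar_mem ha hδ
  have hbound : ∀ x : Set.Ioo (0:ℝ) 1,
      betaSymPDF a x / gaussPDF ((8 * (a + δ)) ^ (-(1:ℝ) / 2)) x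
        ≤ (betaFn a a)⁻¹ * Real.sqrt (2 * Real.pi * ((8 * (a + δ)) ^ (-(1:ℝ) / 2)) ^ 2)
            * Real.exp ((a-1) * Real.log ((a-1)/(4*(a+δ)))
                + 4*(a+δ)*(1/4 - (a-1)/(4*(a+δ)))) := by
    rintro ⟨x, hx⟩
    rw [F_formula had hx]
    have hB : (0:ℝ) < betaFn a a := by
      rw [betaFn_eq (by linarith : (0:ℝ) < a)]
      have hGa : (0:ℝ) < Real.Gamma a := Real.Gamma_pos_of_pos (by linarith)
      have hG2a : (0:ℝ) < Real.Gamma (2*a) := Real.Gamma_pos_of_pos (by linarith)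
      positivity
    have hS : (0:ℝ) ≤ Real.sqrt (2 * Real.pi * ((8 * (a + δ)) ^ (-(1:ℝ) / 2)) ^ 2) :=
      Real.sqrt_nonneg _
    have hu : (0:ℝ) < x * (1-x) := mul_pos hx.1 (by linarith [hx.2])
    have hu4 : x * (1-x) ≤ 1/4 := by nlinarith [sq_nonneg (x - 1/2)]
    have := g_le ha hδ hu hu4
    have hexp := Real.exp_le_exp.mpr this
    have hC : (0:ℝ) ≤ (betaFn a a)⁻¹ * Real.sqrt (2 * Real.pi * ((8 * (a + δ)) ^ (-(1:ℝ) / 2)) ^ 2) :=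
      mul_nonneg (inv_nonneg.mpr hB.le) hS
    exact mul_le_mul_of_nonneg_left hexp hC
  haveI : Nonempty (Set.Ioo (0:ℝ) 1) := ⟨⟨1/2, by norm_num⟩⟩
  apply le_antisymm
  · exact ciSup_le hbound
  · have hle := le_ciSup (f := fun x : Set.Ioo (0:ℝ) 1 =>
        betaSymPDF a x / gaussPDF ((8 * (a + δ)) ^ (-(1:ℝ) / 2)) x)
      ⟨_, Set.forall_mem_range.mpr (fun x => hbound x)⟩ (⟨_, hmem⟩ : Set.Ioo (0:ℝ) 1)
    calc _ = betaSymPDF a (1/2 - Real.sqrt (1/4 - (a-1)/(4*(a+δ))))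
          / gaussPDF ((8 * (a + δ)) ^ (-(1:ℝ) / 2)) (1/2 - Real.sqrt (1/4 - (a-1)/(4*(a+δ)))) := by
          rw [F_formula had hmem, hval]
      _ ≤ _ := hle
end SupComp

lemma logRratio_eq {a δ : ℝ} (ha : 1 < a) (hδ : -1 ≤ δ) :
    Real.log (Rratio δ a)
      = PhiAux a - (a-1/2)*(Real.log (a+δ) - Real.log (a-1/2)) + δ + 1 := by
  rw [Rratio_eq ha hδ]
  have had : (0:ℝ) < a + δ := by linarith
  have ha0 : (0:ℝ) < a := by linarith
  have ha1 : (0:ℝ) < a - 1 := by linarith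
  have hGa : (0:ℝ) < Real.Gamma a := Real.Gamma_pos_of_pos ha0
  have hGah : (0:ℝ) < Real.Gamma (a+1/2) := Real.Gamma_pos_of_pos (by linarith)
  have hG2a : (0:ℝ) < Real.Gamma (2*a) := Real.Gamma_pos_of_pos (by linarith)
  have hB : (0:ℝ) < betaFn a a := by
    rw [betaFn_eq ha0]; positivity
  have hsig : ((8 * (a + δ)) ^ (-(1:ℝ) / 2)) ^ 2 = (8 * (a + δ))⁻¹ := by
    rw [← Real.rpow_natCast ((8 * (a + δ)) ^ (-(1:ℝ) / 2)) 2, ← Real.rpow_mul (by linarith)]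
    norm_num [Real.rpow_neg_one]
  have hSpos : (0:ℝ) < 2 * Real.pi * (8 * (a + δ))⁻¹ := by positivity
  have hsqrt : (0:ℝ) < Real.sqrt (2 * Real.pi * (8 * (a + δ))⁻¹) := Real.sqrt_pos.mpr hSpos
  rw [hsig]
  rw [Real.log_mul (by positivity) (Real.exp_ne_zero _), Real.log_mul (by positivity) hsqrt.ne',
    Real.log_exp, Real.log_inv, Real.log_sqrt hSpos.le]
  -- expand log of S
  have hS : Real.log (2 * Real.pi * (8 * (a + δ))⁻¹)
      = Real.log 2 + Real.log Real.pi - (3 * Real.log 2 + Real.log (a+δ)) := by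
    rw [Real.log_mul (by positivity) (by positivity), Real.log_mul (by norm_num) pi_pos.ne',
      Real.log_inv, Real.log_mul (by norm_num) had.ne',
      show (8:ℝ) = 2^(3:ℕ) by norm_num, Real.log_pow]
    push_cast
    ring
  have hustar : Real.log ((a-1)/(4*(a+δ)))
      = Real.log (a-1) - (2 * Real.log 2 + Real.log (a+δ)) := by
    rw [Real.log_div ha1.ne' (by positivity), Real.log_mul (by norm_num) had.ne',
      show (4:ℝ) = 2^(2:ℕ) by norm_num, Real.log_pow]
    push_cast
    ring
  have hlin : 4*(a+δ)*(1/4 - (a-1)/(4*(a+δ))) = δ + 1 := by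
    field_simp
    ring
  have hlogB : Real.log (betaFn a a)
      = 2 * Real.log (Real.Gamma a) - Real.log (Real.Gamma (2*a)) := by
    rw [betaFn_eq ha0, Real.log_div (by positivity) hG2a.ne', Real.log_mul hGa.ne' hGa.ne']
    ring
  have hdup : Real.log (Real.Gamma (2*a))
      = Real.log (Real.Gamma a) + Real.log (Real.Gamma (a+1/2))
        - (1-2*a)*Real.log 2 - Real.log Real.pi / 2 := by
    have h := Real.Gamma_mul_Gamma_add_half a
    have := congrArg Real.log h
    rw [Real.log_mul hGa.ne' hGah.ne'] at this
    rw [Real.log_mul (by positivity) (Real.sqrt_pos.mpr pi_pos).ne',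
      Real.log_mul hG2a.ne' (by positivity : ((2:ℝ) ^ (1-2*a)) ≠ 0),
      Real.log_rpow (by norm_num), Real.log_sqrt pi_pos.le] at this
    linarith
  rw [hS, hustar, hlin, hlogB, hdup, PhiAux]
  ring

lemma hdelta_hasDeriv {δ t : ℝ} (hδ : -1 ≤ δ) (ht : 1 < t) :
    HasDerivAt (fun t : ℝ => (t-1/2)*(Real.log (t+δ) - Real.log (t-1/2)))
      ((Real.log (t+δ) - Real.log (t-1/2)) + (t-1/2)*(1/(t+δ) - 1/(t-1/2))) t := by
  have h1 : t + δ ≠ 0 := by intro h; linarith [h]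
  have h1' : (0:ℝ) < t + δ := by linarith
  have h2 : t - 1/2 ≠ 0 := by intro h; nlinarith [h]
  have h2' : (0:ℝ) < t - 1/2 := by linarith
  have := (((hasDerivAt_id t).sub_const (1/2)).mul
    ((((hasDerivAt_id t).add_const δ).log h1'.ne').sub
      (((hasDerivAt_id t).sub_const (1/2)).log h2'.ne')))
  simp only [id_eq] at this
  refine this.congr_deriv ?_
  simp only [Pi.sub_apply]
  ring

lemma hdelta_mono {δ : ℝ} (hδ : -1 ≤ δ) :
    MonotoneOn (fun t : ℝ => (t-1/2)*(Real.log (t+δ) - Real.log (t-1/2))) (Set.Ioi (1:ℝ)) := by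
  apply monotoneOn_of_deriv_nonneg (convex_Ioi 1)
  · intro x hx
    exact (hdelta_hasDeriv hδ hx).continuousAt.continuousWithinAt
  · intro x hx
    rw [interior_Ioi] at hx
    exact (hdelta_hasDeriv hδ hx).differentiableAt.differentiableWithinAt
  · intro x hx
    rw [interior_Ioi] at hx
    rw [(hdelta_hasDeriv hδ hx).deriv]
    have h1 : (0:ℝ) < x + δ := by linarith [Set.mem_Ioi.mp hx]
    have hx1 : (1:ℝ) < x := hx
    have h2 : (0:ℝ) < x - 1/2 := by linarith
    have key : Real.log (x-1/2) - Real.log (x+δ) ≤ (x-1/2)/(x+δ) - 1 := by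
      have := Real.log_le_sub_one_of_pos (show (0:ℝ) < (x-1/2)/(x+δ) by positivity)
      rwa [Real.log_div h2.ne' h1.ne'] at this
    have e : (x-1/2)*(1/(x+δ) - 1/(x-1/2)) = (x-1/2)/(x+δ) - 1 := by
      rw [mul_sub, mul_one_div, mul_one_div, div_self h2.ne']
    rw [e]
    linarith

theorem logR_strictAnti (δ : ℝ) (hδ : -1 ≤ δ) :
    StrictAntiOn (fun a => Real.log (Rratio δ a)) (Set.Ioi (1:ℝ)) := by
  intro a ha b hb hab
  rw [Set.mem_Ioi] at ha hb
  simp only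
  rw [logRratio_eq ha hδ, logRratio_eq hb hδ]
  have hPhi : PhiAux b - PhiAux a ≤ rhoAux b - rhoAux a := Phi_diff_le ha hab
  have hrho : rhoAux b < rhoAux a :=
    rhoAux_strictAntiOn (Set.mem_Ioi.mpr ha) (Set.mem_Ioi.mpr hb) hab
  have hmono := hdelta_mono hδ (Set.mem_Ioi.mpr ha) (Set.mem_Ioi.mpr hb) hab.le
  simp only at hmono
  linarith
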